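/- Let p, q be nonzero complex numbers. The 4×4 matrix R̂_I = [[1,0,0,0],[0,0,q,0],[0,p,1-pq,0],[0,0,0,1]] satisfies the braid relation R̂₁₂ R̂₂₃ R̂₁₂ = R̂₂₃ R̂₁₂ R̂₂₃ as 8×8 matrices, where R̂₁₂ = R̂_I ⊗ I₂ and R̂₂₃ = I₂ ⊗ R̂_I. -/
import Mathlib


open Matrix Kronecker

/-- The type I braid matrix `R̂_I`, obtained from the type I R-matrix by the index flip
`R̂^{ij}_{kl} = R^{ji}_{kl}`; rows and columns are indexed by pairs
(1,1),(1,2),(2,1),(2,2). -/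
noncomputable def RhatI (p q : ℂ) : Matrix (Fin 2 × Fin 2) (Fin 2 × Fin 2) ℂ :=
  (!![1, 0, 0, 0;
      0, 0, q, 0;
      0, p, 1 - p * q, 0;
      0, 0, 0, 1]).submatrix finProdFinEquiv finProdFinEquiv

/-- `R̂₁₂ = R̂ ⊗ I₂` as an 8×8 matrix (indices reassociated). -/
noncomputable def Rhat12 (R : Matrix (Fin 2 × Fin 2) (Fin 2 × Fin 2) ℂ) :
    Matrix (Fin 2 × Fin 2 × Fin 2) (Fin 2 × Fin 2 × Fin 2) ℂ :=
  Matrix.reindex (Equiv.prodAssoc _ _ _) (Equiv.prodAssoc _ _ _)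
    (R ⊗ₖ (1 : Matrix (Fin 2) (Fin 2) ℂ))

/-- `R̂₂₃ = I₂ ⊗ R̂` as an 8×8 matrix. -/
noncomputable def Rhat23 (R : Matrix (Fin 2 × Fin 2) (Fin 2 × Fin 2) ℂ) :
    Matrix (Fin 2 × Fin 2 × Fin 2) (Fin 2 × Fin 2 × Fin 2) ℂ :=
  (1 : Matrix (Fin 2) (Fin 2) ℂ) ⊗ₖ R

set_option maxHeartbeats 2000000 in
/-- The type I braid matrix satisfies the braid relation
`R̂₁₂ R̂₂₃ R̂₁₂ = R̂₂₃ R̂₁₂ R̂₂₃`. -/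
theorem typeI_braid (p q : ℂ) (hp : p ≠ 0) (hq : q ≠ 0) :
    Rhat12 (RhatI p q) * Rhat23 (RhatI p q) * Rhat12 (RhatI p q) =
      Rhat23 (RhatI p q) * Rhat12 (RhatI p q) * Rhat23 (RhatI p q) := by
  ext ⟨i,j,k⟩ ⟨a,b,c⟩
  simp only [Rhat12, Rhat23, RhatI, Matrix.mul_apply, Matrix.reindex_apply,
    Matrix.submatrix_apply, Matrix.kroneckerMap_apply, Fintype.sum_prod_type,
    Fin.sum_univ_two, Equiv.prodAssoc_symm_apply, Matrix.one_apply]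
  fin_cases i <;> fin_cases j <;> fin_cases k <;> fin_cases a <;> fin_cases b <;> fin_cases c <;>
    simp [finProdFinEquiv, Fin.ext_iff, Matrix.vecHead, Matrix.vecTail] <;> ring
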